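/- Let A be a unital Banach algebra, A₀, B ∈ A with A₀ invertible, and L(x,t) = exp(A₀ x + A₀³ t) B. On the set where I + L is invertible, the function W := (I + L)⁻¹ (A₀ L + L A₀) satisfies the noncommutative potential KdV equation W_t = W_xxx + 3 W_x². -/

import Mathlib

variable {A : Type*} [NormedRing A] [NormedAlgebra ℝ A] [CompleteSpace A]

/-- partial derivative in the first (space) variable -/
noncomputable def px (Q : ℝ × ℝ → A) : ℝ × ℝ → A := fun p => deriv (fun x => Q (x, p.2)) p.1

/-- partial derivative in the second (time) variable -/
noncomputable def pt (Q : ℝ × ℝ → A) : ℝ × ℝ → A := fun p => deriv (fun t => Q (p.1, t)) p.2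

/- Normal forms of the first three x-derivatives and the t-derivative of W,
written in the letters `a = A₀`, `c = (1+L)⁻¹ * a`, `w = 1 + L`. -/

private def w1f (a c w : A) : A := c*a - (c*c + c*c) + c*c*w

private def w2f (a c w : A) : A :=
  -(c*a*a) + (c*a*c + c*a*c) - c*a*c*w + (c*c*a + c*c*a)
    - (c*c*c + c*c*c + c*c*c + c*c*c) + (c*c*c*w + c*c*c*w)

private def w3f (a c w : A) : A :=
  c*a*a*a - (c*a*a*c + c*a*a*c) + c*a*a*c*w - (c*a*c*a + c*a*c*a + c*a*c*a)
    + (c*a*c*c + c*a*c*c + c*a*c*c + c*a*c*c + c*a*c*c + c*a*c*c)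
    - (c*a*c*c*w + c*a*c*c*w + c*a*c*c*w) - (c*c*a*a + c*c*a*a + c*c*a*a)
    + (c*c*a*c + c*c*a*c + c*c*a*c + c*c*a*c + c*c*a*c + c*c*a*c)
    - (c*c*a*c*w + c*c*a*c*w + c*c*a*c*w)
    + (c*c*c*a + c*c*c*a + c*c*c*a + c*c*c*a + c*c*c*a + c*c*c*a)
    - (c*c*c*c + c*c*c*c + c*c*c*c + c*c*c*c + c*c*c*c + c*c*c*c
        + c*c*c*c + c*c*c*c + c*c*c*c + c*c*c*c + c*c*c*c + c*c*c*c)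
    + (c*c*c*c*w + c*c*c*c*w + c*c*c*c*w + c*c*c*c*w + c*c*c*c*w + c*c*c*c*w)

private def wtf' (a c w : A) : A := c*a*a*a - (c*a*a*c + c*a*a*c) + c*a*a*c*w

private lemma d_w1 (a : A) {c w : ℝ → A} {x : ℝ}
    (hc : HasDerivAt c (c x * c x - c x * a) x)
    (hw : HasDerivAt w (a * w x - a) x) :
    HasDerivAt (fun y => w1f a (c y) (w y)) (w2f a (c x) (w x)) x := by
  have h := ((hc.mul_const a).sub ((hc.mul hc).add (hc.mul hc))).add ((hc.mul hc).mul hw)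
  refine h.congr_deriv (Eq.symm ?_)
  simp only [w1f, w2f, Pi.mul_apply]
  noncomm_ring

private lemma d_w2 (a : A) {c w : ℝ → A} {x : ℝ}
    (hc : HasDerivAt c (c x * c x - c x * a) x)
    (hw : HasDerivAt w (a * w x - a) x) :
    HasDerivAt (fun y => w2f a (c y) (w y)) (w3f a (c x) (w x)) x := by
  have h := (((((((hc.mul_const a).mul_const a).neg.add
      ((((hc.mul_const a).mul hc)).add ((hc.mul_const a).mul hc))).sub
      ((((hc.mul_const a).mul hc)).mul hw)).add
      (((hc.mul hc).mul_const a).add ((hc.mul hc).mul_const a))).sub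
      (((((hc.mul hc).mul hc).add ((hc.mul hc).mul hc)).add
        ((hc.mul hc).mul hc)).add ((hc.mul hc).mul hc))).add
      ((((hc.mul hc).mul hc).mul hw).add (((hc.mul hc).mul hc).mul hw)))
  refine h.congr_deriv (Eq.symm ?_)
  simp only [w2f, w3f, Pi.mul_apply]
  noncomm_ring

private lemma alg_v (a l : A) (u : Aˣ) (hl : (1:A) + l = ↑u) :
    (↑u⁻¹:A) * a * (↑u⁻¹:A) - (↑u⁻¹:A) * a = -((↑u⁻¹:A) * (a * l) * (↑u⁻¹:A)) := by
  have hl' : l = (↑u:A) - 1 := by rw [← hl]; abel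
  rw [hl']
  simp only [mul_sub, sub_mul, mul_add, add_mul, neg_mul, mul_neg, neg_neg, mul_one, one_mul, mul_assoc,
    Units.mul_inv_cancel_left, Units.inv_mul_cancel_left, Units.mul_inv, Units.inv_mul]
  noncomm_ring

private lemma alg0 (a l : A) (u : Aˣ) (hl : (1:A) + l = ↑u) :
    w1f a ((↑u⁻¹:A) * a) (1 + l) =
      ((↑u⁻¹:A) * a * (↑u⁻¹:A) - (↑u⁻¹:A) * a) * (a * l + l * a)
        + (↑u⁻¹:A) * (a * (a * l) + (a * l) * a) := by
  have hl' : l = (↑u:A) - 1 := by rw [← hl]; abel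
  rw [hl, hl']
  simp only [w1f, mul_sub, sub_mul, mul_add, add_mul, neg_mul, mul_neg, neg_neg, mul_one, one_mul, mul_assoc,
    Units.mul_inv_cancel_left, Units.inv_mul_cancel_left, Units.mul_inv, Units.inv_mul]
  noncomm_ring

private lemma alg_t (a l : A) (u : Aˣ) (hl : (1:A) + l = ↑u) :
    wtf' a ((↑u⁻¹:A) * a) (1 + l) =
      -((↑u⁻¹:A) * (a ^ 3 * l) * (↑u⁻¹:A)) * (a * l + l * a)
        + (↑u⁻¹:A) * (a * (a ^ 3 * l) + (a ^ 3 * l) * a) := by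
  have hl' : l = (↑u:A) - 1 := by rw [← hl]; abel
  rw [hl, hl']
  simp only [wtf', pow_succ, pow_zero, mul_sub, sub_mul, mul_add, add_mul, neg_mul, mul_neg,
    neg_neg, mul_one, one_mul, mul_assoc,
    Units.mul_inv_cancel_left, Units.inv_mul_cancel_left, Units.mul_inv, Units.inv_mul]
  noncomm_ring

private lemma alg_fin (a l : A) (u : Aˣ) (hl : (1:A) + l = ↑u) :
    wtf' a ((↑u⁻¹:A) * a) (1 + l) =
      w3f a ((↑u⁻¹:A) * a) (1 + l)
        + 3 * (w1f a ((↑u⁻¹:A) * a) (1 + l) * w1f a ((↑u⁻¹:A) * a) (1 + l)) := by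
  rw [hl]
  simp only [w1f, w2f, w3f, wtf', mul_sub, sub_mul, mul_add, add_mul, neg_mul, mul_neg,
    neg_neg, mul_one, one_mul, mul_assoc,
    Units.mul_inv_cancel_left, Units.inv_mul_cancel_left, Units.mul_inv, Units.inv_mul]
  noncomm_ring

theorem stmt_8 (A₀ B : A) (hA : IsUnit A₀)
    (L : ℝ × ℝ → A) (hL : L = fun p : ℝ × ℝ => NormedSpace.exp (p.1 • A₀ + p.2 • A₀ ^ 3) * B)
    (W : ℝ × ℝ → A) (hW : W = fun p => Ring.inverse (1 + L p) * (A₀ * L p + L p * A₀)) :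
    ∀ p : ℝ × ℝ, IsUnit (1 + L p) →
      pt W p = px (px (px W)) p + 3 * (px W p * px W p) := by
  intro p hp
  set a : A := A₀ with ha
  -- the exponential splits
  have hsplit : ∀ y s : ℝ, L (y, s) =
      NormedSpace.exp (y • a) * (NormedSpace.exp (s • a ^ 3) * B) := by
    intro y s
    have hcomm : Commute (y • a) (s • a ^ 3) :=
      (((Commute.refl a).pow_right 3).smul_left y).smul_right s
    rw [hL]
    simp only []
    letI : NormedAlgebra ℚ A := NormedAlgebra.restrictScalars ℚ ℝ A
    rw [NormedSpace.exp_add_of_commute hcomm, mul_assoc]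
  -- spatial derivative of L
  have hLx : ∀ q : ℝ × ℝ, HasDerivAt (fun y => L (y, q.2)) (a * L q) q.1 := by
    intro q
    have h1 : HasDerivAt
        (fun y : ℝ => NormedSpace.exp (y • a) * (NormedSpace.exp (q.2 • a ^ 3) * B))
        ((a * NormedSpace.exp (q.1 • a)) * (NormedSpace.exp (q.2 • a ^ 3) * B)) q.1 :=
      (hasDerivAt_exp_smul_const' a q.1).mul_const _
    have h2 : (fun y => L (y, q.2)) =
        fun y : ℝ => NormedSpace.exp (y • a) * (NormedSpace.exp (q.2 • a ^ 3) * B) :=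
      funext fun y => hsplit y q.2
    rw [h2]
    convert h1 using 1
    rw [show L q = L (q.1, q.2) from rfl, hsplit q.1 q.2]
    noncomm_ring
  -- time derivative of L
  have hLt : ∀ q : ℝ × ℝ, HasDerivAt (fun s => L (q.1, s)) (a ^ 3 * L q) q.2 := by
    intro q
    have h1 : HasDerivAt
        (fun s : ℝ => NormedSpace.exp (q.1 • a) * NormedSpace.exp (s • a ^ 3) * B)
        (NormedSpace.exp (q.1 • a) * (a ^ 3 * NormedSpace.exp (q.2 • a ^ 3)) * B) q.2 :=
      ((hasDerivAt_exp_smul_const' (a ^ 3) q.2).const_mul _).mul_const B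
    have h2 : (fun s => L (q.1, s)) =
        fun s : ℝ => NormedSpace.exp (q.1 • a) * NormedSpace.exp (s • a ^ 3) * B :=
      funext fun s => (hsplit q.1 s).trans (mul_assoc _ _ _).symm
    rw [h2]
    convert h1 using 1
    have hc3 : Commute (a ^ 3) (NormedSpace.exp (q.1 • a)) :=
      (((Commute.refl a).pow_left 3).smul_right q.1).exp_right
    rw [show L q = L (q.1, q.2) from rfl, hsplit q.1 q.2, ← mul_assoc, hc3.eq]
    noncomm_ring
  -- unit points are stable in the x direction
  have hUopen : ∀ q : ℝ × ℝ, IsUnit (1 + L q) →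
      ∀ᶠ y in nhds q.1, IsUnit (1 + L (y, q.2)) := by
    intro q hq
    have hcont : Continuous fun y : ℝ => (1 : A) + L (y, q.2) := by
      letI : NormedAlgebra ℚ A := NormedAlgebra.restrictScalars ℚ ℝ A
      simp only [hL]
      exact continuous_const.add
        ((NormedSpace.exp_continuous.comp
          ((continuous_id.smul continuous_const).add continuous_const)).mul continuous_const)
    exact hcont.continuousAt.eventually_mem (Units.isOpen.mem_nhds hq)
  -- inverse at unit points
  have hvq : ∀ q : ℝ × ℝ, ∀ hq : IsUnit (1 + L q),
      Ring.inverse (1 + L q) = (↑hq.unit⁻¹ : A) := by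
    intro q hq
    rw [← Ring.inverse_unit hq.unit]
    exact congrArg _ hq.unit_spec.symm
  -- x-derivative of the inverse
  have hV : ∀ q : ℝ × ℝ, ∀ hq : IsUnit (1 + L q),
      HasDerivAt (fun y => Ring.inverse (1 + L (y, q.2)))
        (Ring.inverse (1 + L q) * a * Ring.inverse (1 + L q)
          - Ring.inverse (1 + L q) * a) q.1 := by
    intro q hq
    have h1 : HasDerivAt (fun y => (1 : A) + L (y, q.2)) (a * L q) q.1 := by
      exact (hLx q).const_add (1 : A)
    have h2 := (hq.unit_spec ▸ hasFDerivAt_ringInverse (𝕜 := ℝ) hq.unit).comp_hasDerivAt q.1 h1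
    refine h2.congr_deriv (Eq.symm ?_)
    simp only [ContinuousLinearMap.neg_apply, ContinuousLinearMap.mulLeftRight_apply, hvq q hq]
    exact alg_v a (L q) hq.unit hq.unit_spec.symm
  -- the building blocks c and w
  have hc' : ∀ q : ℝ × ℝ, ∀ _hq : IsUnit (1 + L q),
      HasDerivAt (fun y => Ring.inverse (1 + L (y, q.2)) * a)
        ((Ring.inverse (1 + L q) * a) * (Ring.inverse (1 + L q) * a)
          - (Ring.inverse (1 + L q) * a) * a) q.1 := by
    intro q hq
    have h := (hV q hq).mul_const a
    convert h using 1
    noncomm_ring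
  have hw' : ∀ q : ℝ × ℝ,
      HasDerivAt (fun y => (1 : A) + L (y, q.2)) (a * (1 + L q) - a) q.1 := by
    intro q
    have h : HasDerivAt (fun y => (1 : A) + L (y, q.2)) (a * L q) q.1 := by
      exact (hLx q).const_add (1 : A)
    convert h using 1
    rw [mul_add, mul_one]
    abel
  -- first x-derivative of W
  have hW1 : ∀ q : ℝ × ℝ, ∀ hq : IsUnit (1 + L q),
      HasDerivAt (fun y => W (y, q.2))
        (w1f a (Ring.inverse (1 + L q) * a) (1 + L q)) q.1 := by
    intro q hq
    have h := (hV q hq).mul (((hLx q).const_mul a).add ((hLx q).mul_const a))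
    simp only [hW]
    refine h.congr_deriv (Eq.symm ?_)
    rw [hvq q hq]
    exact alg0 a (L q) hq.unit hq.unit_spec.symm
  have hW2 : ∀ q : ℝ × ℝ, ∀ hq : IsUnit (1 + L q),
      HasDerivAt (fun y => w1f a (Ring.inverse (1 + L (y, q.2)) * a) (1 + L (y, q.2)))
        (w2f a (Ring.inverse (1 + L q) * a) (1 + L q)) q.1 :=
    fun q hq => d_w1 a (hc' q hq) (hw' q)
  have hW3 : ∀ q : ℝ × ℝ, ∀ hq : IsUnit (1 + L q),
      HasDerivAt (fun y => w2f a (Ring.inverse (1 + L (y, q.2)) * a) (1 + L (y, q.2)))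
        (w3f a (Ring.inverse (1 + L q) * a) (1 + L q)) q.1 :=
    fun q hq => d_w2 a (hc' q hq) (hw' q)
  -- t-derivative of W
  have hWt : HasDerivAt (fun s => W (p.1, s))
      (wtf' a (Ring.inverse (1 + L p) * a) (1 + L p)) p.2 := by
    have h1 : HasDerivAt (fun s => (1 : A) + L (p.1, s)) (a ^ 3 * L p) p.2 := by
      exact (hLt p).const_add (1 : A)
    have h2 := (hp.unit_spec ▸ hasFDerivAt_ringInverse (𝕜 := ℝ) hp.unit).comp_hasDerivAt p.2 h1
    have h := h2.mul (((hLt p).const_mul a).add ((hLt p).mul_const a))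
    simp only [hW]
    refine h.congr_deriv (Eq.symm ?_)
    simp only [Function.comp_apply, ContinuousLinearMap.neg_apply,
      ContinuousLinearMap.mulLeftRight_apply, hvq p hp]
    exact alg_t a (L p) hp.unit hp.unit_spec.symm
  -- identification of the iterated partial derivatives
  have e1 : ∀ q : ℝ × ℝ, IsUnit (1 + L q) →
      px W q = w1f a (Ring.inverse (1 + L q) * a) (1 + L q) :=
    fun q hq => (hW1 q hq).deriv
  have e2 : ∀ q : ℝ × ℝ, IsUnit (1 + L q) →
      px (px W) q = w2f a (Ring.inverse (1 + L q) * a) (1 + L q) := by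
    intro q hq
    have heq : (fun y => px W (y, q.2)) =ᶠ[nhds q.1]
        fun y => w1f a (Ring.inverse (1 + L (y, q.2)) * a) (1 + L (y, q.2)) :=
      (hUopen q hq).mono fun y hy => e1 (y, q.2) hy
    have h1 : px (px W) q
        = deriv (fun y => w1f a (Ring.inverse (1 + L (y, q.2)) * a) (1 + L (y, q.2))) q.1 :=
      heq.deriv_eq
    rw [h1]
    exact (hW2 q hq).deriv
  have e3 : ∀ q : ℝ × ℝ, IsUnit (1 + L q) →
      px (px (px W)) q = w3f a (Ring.inverse (1 + L q) * a) (1 + L q) := by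
    intro q hq
    have heq : (fun y => px (px W) (y, q.2)) =ᶠ[nhds q.1]
        fun y => w2f a (Ring.inverse (1 + L (y, q.2)) * a) (1 + L (y, q.2)) :=
      (hUopen q hq).mono fun y hy => e2 (y, q.2) hy
    have h1 : px (px (px W)) q
        = deriv (fun y => w2f a (Ring.inverse (1 + L (y, q.2)) * a) (1 + L (y, q.2))) q.1 :=
      heq.deriv_eq
    rw [h1]
    exact (hW3 q hq).deriv
  have et : pt W p = wtf' a (Ring.inverse (1 + L p) * a) (1 + L p) := hWt.deriv
  rw [et, e3 p hp, e1 p hp, hvq p hp]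
  exact alg_fin a (L p) hp.unit hp.unit_spec.symm
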